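/- Let μ > 0, α > 0, d_N, d_T ∈ ℕ, and let H ∈ ℝ^{d_N × d_N} be a symmetric matrix with ⟨v, Hv⟩ ≥ μ‖v‖² for all v ∈ ℝ^{d_N}. Define the block matrix A ∈ ℝ^{(d_N + d_T + d_N) × (d_N + d_T + d_N)} by A = [[0, 0, Id_{d_N}], [0, −α Id_{d_T}, 0], [−H, 0, −α Id_{d_N}]]. Then every complex eigenvalue ρ of A satisfies Re(ρ) ≤ −m(α), where m(α) = (1/2)(α − √(max(0, α² − 4μ))). -/

import Mathlib

open RealInnerProductSpace
open Matrix in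

/-- **Spectrum of the linearized heavy ball ODE system (continuous time).**
Let `μ, α > 0` and let `H` be a symmetric `dN × dN` matrix with `⟪v, Hv⟫ ≥ μ‖v‖²` for all
`v`. Then every complex eigenvalue `ρ` of the block matrix
`A = [[0, 0, Id], [0, -α Id, 0], [-H, 0, -α Id]]` (blocks of sizes `dN`, `dT`, `dN`)
satisfies `Re ρ ≤ -m(α)` where `m(α) = (α - √(max 0 (α² - 4μ)))/2`. -/
theorem heavy_ball_ode_linearization_spectrum
    (μ α : ℝ) (hμ : 0 < μ) (hα : 0 < α) (dN dT : ℕ)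
    (H : Matrix (Fin dN) (Fin dN) ℝ) (hH : H.IsSymm)
    (hHpos : ∀ v : EuclideanSpace ℝ (Fin dN), μ * ‖v‖ ^ 2 ≤ ⟪v, Matrix.toEuclideanLin H v⟫) :
    ∀ ρ ∈ spectrum ℂ
      ((Matrix.fromBlocks
          (Matrix.fromBlocks (0 : Matrix (Fin dN) (Fin dN) ℝ) (0 : Matrix (Fin dN) (Fin dT) ℝ)
            (0 : Matrix (Fin dT) (Fin dN) ℝ) (-(α • (1 : Matrix (Fin dT) (Fin dT) ℝ))))
          (Matrix.fromRows (1 : Matrix (Fin dN) (Fin dN) ℝ) (0 : Matrix (Fin dT) (Fin dN) ℝ))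
          (Matrix.fromCols (-H) (0 : Matrix (Fin dN) (Fin dT) ℝ))
          (-(α • (1 : Matrix (Fin dN) (Fin dN) ℝ)))).map Complex.ofReal),
      ρ.re ≤ -((α - Real.sqrt (max 0 (α ^ 2 - 4 * μ))) / 2) := by
  intro ρ hρ
  set s : ℝ := Real.sqrt (max 0 (α ^ 2 - 4 * μ)) with hs
  have hs0 : 0 ≤ s := Real.sqrt_nonneg _
  have hs2 : s ^ 2 = max 0 (α ^ 2 - 4 * μ) := Real.sq_sqrt (le_max_left _ _)
  have hs2' : α ^ 2 - 4 * μ ≤ s ^ 2 := hs2 ▸ le_max_right _ _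
  -- quadratic form bound in coordinates
  have quad : ∀ a : Fin dN → ℝ, μ * ∑ i, a i * a i ≤ ∑ i, a i * ∑ j, H i j * a j := by
    intro a
    have h := hHpos ((WithLp.equiv 2 (Fin dN → ℝ)).symm a)
    rw [← real_inner_self_eq_norm_sq] at h
    simpa [PiLp.inner_apply, RCLike.inner_apply, Matrix.toEuclideanLin_apply_piLp_toLp,
      Matrix.mulVec, dotProduct, mul_comm, EuclideanSpace.norm_sq_eq, ← pow_two] using h
  set B := ((Matrix.fromBlocks
          (Matrix.fromBlocks (0 : Matrix (Fin dN) (Fin dN) ℝ) (0 : Matrix (Fin dN) (Fin dT) ℝ)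
            (0 : Matrix (Fin dT) (Fin dN) ℝ) (-(α • (1 : Matrix (Fin dT) (Fin dT) ℝ))))
          (Matrix.fromRows (1 : Matrix (Fin dN) (Fin dN) ℝ) (0 : Matrix (Fin dT) (Fin dN) ℝ))
          (Matrix.fromCols (-H) (0 : Matrix (Fin dN) (Fin dT) ℝ))
          (-(α • (1 : Matrix (Fin dN) (Fin dN) ℝ)))).map Complex.ofReal) with hBdef
  rw [spectrum.mem_iff, Matrix.isUnit_iff_isUnit_det, isUnit_iff_ne_zero, not_not] at hρ
  obtain ⟨w, hw0, hw⟩ := (Matrix.exists_mulVec_eq_zero_iff).2 hρ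
  rw [Matrix.sub_mulVec, sub_eq_zero] at hw
  have hB : B *ᵥ w = ρ • w := by
    rw [← hw, Algebra.algebraMap_eq_smul_one, Matrix.smul_mulVec, Matrix.one_mulVec]
  have e1 : ∀ i, w (Sum.inr i) = ρ * w (Sum.inl (Sum.inl i)) := by
    intro i
    have h := congrFun hB (Sum.inl (Sum.inl i))
    simp [hBdef, Matrix.mulVec, dotProduct, Fintype.sum_sum_type, Matrix.fromBlocks,
      Matrix.fromRows_apply_inl, Matrix.fromRows_apply_inr, Matrix.fromCols, Matrix.map_apply, Matrix.one_apply,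
      apply_ite Complex.ofReal, ite_mul, Finset.sum_ite_eq] at h
    exact h
  have e2 : ∀ j, -((α:ℂ) * w (Sum.inl (Sum.inr j))) = ρ * w (Sum.inl (Sum.inr j)) := by
    intro j
    have h := congrFun hB (Sum.inl (Sum.inr j))
    simp [hBdef, Matrix.mulVec, dotProduct, Fintype.sum_sum_type, Matrix.fromBlocks,
      Matrix.fromRows_apply_inl, Matrix.fromRows_apply_inr, Matrix.fromCols, Matrix.map_apply, Matrix.one_apply,
      apply_ite Complex.ofReal, ite_mul, Finset.sum_ite_eq] at h
    exact h
  have e3 : ∀ i, -(∑ j, (H i j : ℂ) * w (Sum.inl (Sum.inl j))) - α * w (Sum.inr i)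
      = ρ * w (Sum.inr i) := by
    intro i
    have h := congrFun hB (Sum.inr i)
    simp [hBdef, Matrix.mulVec, dotProduct, Fintype.sum_sum_type, Matrix.fromBlocks,
      Matrix.fromRows_apply_inl, Matrix.fromRows_apply_inr, Matrix.fromCols, Matrix.map_apply, Matrix.one_apply,
      apply_ite Complex.ofReal, ite_mul, Finset.sum_ite_eq] at h
    exact h
  set x : Fin dN → ℂ := fun i => w (Sum.inl (Sum.inl i)) with hxdef
  by_cases hx0 : x = 0
  · -- the eigenvector is supported on the `t` block, so ρ = -α
    have hv0 : ∀ i, w (Sum.inr i) = 0 := by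
      intro i
      have hxi : w (Sum.inl (Sum.inl i)) = 0 := congrFun hx0 i
      rw [e1 i, hxi, mul_zero]
    have ht : ∃ j, w (Sum.inl (Sum.inr j)) ≠ 0 := by
      by_contra hc
      push_neg at hc
      apply hw0
      funext k
      rcases k with (k | k) | k
      · exact congrFun hx0 k
      · exact hc k
      · exact hv0 k
    obtain ⟨j, hj⟩ := ht
    have hρα : ρ = -(α:ℂ) := by
      have h := e2 j
      have h' : (ρ + α) * w (Sum.inl (Sum.inr j)) = 0 := by linear_combination -h
      rcases mul_eq_zero.mp h' with h'' | h''
      · exact eq_neg_of_add_eq_zero_left h''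
      · exact absurd h'' hj
    have : ρ.re = -α := by rw [hρα]; simp
    rw [this]
    linarith
  · -- genuine eigenvector of H: obtain an eigenvalue l = -(ρ+α)ρ of H
    set l : ℂ := -(ρ + α) * ρ with hl
    have heig : ∀ i, (∑ j, (H i j : ℂ) * x j) = l * x i := by
      intro i
      have h3 := e3 i
      have h1 := e1 i
      rw [h1] at h3
      rw [hl]
      linear_combination -h3
    set a : Fin dN → ℝ := fun i => (x i).re with ha
    set b : Fin dN → ℝ := fun i => (x i).im with hb
    set S : ℝ := ∑ i, (a i * a i + b i * b i) with hS
    have hSpos : 0 < S := by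
      obtain ⟨i, hi⟩ := Function.ne_iff.mp hx0
      have hpos : 0 < Complex.normSq (x i) := Complex.normSq_pos.mpr hi
      rw [hS]
      refine Finset.sum_pos' (fun j _ => add_nonneg (mul_self_nonneg _) (mul_self_nonneg _))
        ⟨i, Finset.mem_univ i, ?_⟩
      simpa [Complex.normSq_apply, ha, hb] using hpos
    have hScast : (S : ℂ) = ∑ i, (starRingEnd ℂ) (x i) * x i := by
      rw [hS]
      push_cast
      refine Finset.sum_congr rfl fun i _ => ?_
      apply Complex.ext <;>
        simp [Complex.mul_re, Complex.mul_im, ha, hb] <;> ring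
    have hQ : l * (S : ℂ) = ∑ i, (starRingEnd ℂ) (x i) * (∑ j, (H i j : ℂ) * x j) := by
      rw [hScast, Finset.mul_sum]
      refine Finset.sum_congr rfl fun i _ => ?_
      rw [heig i]
      ring
    have hQre : (∑ i, (starRingEnd ℂ) (x i) * (∑ j, (H i j : ℂ) * x j)).re
        = ∑ i, ∑ j, H i j * (a i * a j + b i * b j) := by
      rw [Complex.re_sum]
      refine Finset.sum_congr rfl fun i _ => ?_
      rw [Finset.mul_sum, Complex.re_sum]
      refine Finset.sum_congr rfl fun j _ => ?_
      simp only [ha, hb, Complex.mul_re, Complex.mul_im, Complex.conj_re, Complex.conj_im,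
        Complex.ofReal_re, Complex.ofReal_im]
      ring
    have hQim : (∑ i, (starRingEnd ℂ) (x i) * (∑ j, (H i j : ℂ) * x j)).im
        = ∑ i, ∑ j, H i j * (a i * b j - b i * a j) := by
      rw [Complex.im_sum]
      refine Finset.sum_congr rfl fun i _ => ?_
      rw [Finset.mul_sum, Complex.im_sum]
      refine Finset.sum_congr rfl fun j _ => ?_
      simp only [ha, hb, Complex.mul_re, Complex.mul_im, Complex.conj_re, Complex.conj_im,
        Complex.ofReal_re, Complex.ofReal_im]
      ring
    have hQim0 : (∑ i, ∑ j, H i j * (a i * b j - b i * a j)) = 0 := by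
      have h2 : ∑ i, ∑ j, H i j * (b i * a j) = ∑ i, ∑ j, H i j * (a i * b j) := by
        rw [Finset.sum_comm]
        refine Finset.sum_congr rfl fun i _ => Finset.sum_congr rfl fun j _ => ?_
        rw [hH.apply i j]
        ring
      simp only [mul_sub, Finset.sum_sub_distrib]
      rw [h2, sub_self]
    have hsplit : ∑ i, ∑ j, H i j * (a i * a j + b i * b j)
        = (∑ i, a i * ∑ j, H i j * a j) + (∑ i, b i * ∑ j, H i j * b j) := by
      rw [← Finset.sum_add_distrib]
      refine Finset.sum_congr rfl fun i _ => ?_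
      rw [Finset.mul_sum, Finset.mul_sum, ← Finset.sum_add_distrib]
      refine Finset.sum_congr rfl fun j _ => ?_
      ring
    have hlre : μ ≤ l.re := by
      have h := congrArg Complex.re hQ
      simp only [Complex.mul_re, Complex.ofReal_re, Complex.ofReal_im, mul_zero, sub_zero] at h
      rw [hQre, hsplit] at h
      have hA := quad a
      have hB2 := quad b
      have hμS : μ * S ≤ l.re * S := by
        rw [h, hS, Finset.sum_add_distrib, mul_add]
        exact add_le_add hA hB2
      exact le_of_mul_le_mul_right hμS hSpos
    have hlim : l.im = 0 := by
      have h := congrArg Complex.im hQ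
      simp only [Complex.mul_im, Complex.ofReal_re, Complex.ofReal_im, mul_zero, zero_add,
        add_zero] at h
      rw [hQim, hQim0] at h
      rcases mul_eq_zero.mp h with h' | h'
      · exact h'
      · exact absurd h' (ne_of_gt hSpos)
    -- translate to real and imaginary parts of ρ
    have hre' : μ ≤ -((ρ.re + α) * ρ.re - ρ.im * ρ.im) := by
      have hc : l.re = -((ρ.re + α) * ρ.re - ρ.im * ρ.im) := by
        simp only [hl, Complex.mul_re, Complex.neg_re, Complex.neg_im, Complex.add_re,
          Complex.add_im, Complex.ofReal_re, Complex.ofReal_im]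
        ring
      rw [hc] at hlre
      exact hlre
    have him' : ρ.im * (2 * ρ.re + α) = 0 := by
      have hc : l.im = -(ρ.im * (2 * ρ.re + α)) := by
        simp only [hl, Complex.mul_im, Complex.neg_re, Complex.neg_im, Complex.add_re,
          Complex.add_im, Complex.ofReal_re, Complex.ofReal_im]
        ring
      rw [hc] at hlim
      linarith
    rcases mul_eq_zero.mp him' with hq0 | hpα
    · rw [hq0] at hre'
      have h4 : (2 * ρ.re + α) ^ 2 ≤ s ^ 2 := by nlinarith
      nlinarith [h4, hs0, sq_nonneg (2 * ρ.re + α - s), sq_nonneg (2 * ρ.re + α + s)]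
    · linarith
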